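/- For word w = c (a single letter c), the generating function over permutations σ ∈ S_{n+1} satisfying σ⁻¹(1) < σ⁻¹(n+1) (no n-descent condition is automatic) of q^{inv_n(σ)} equals [n-1]_q! · ∑_{i=1}^{n} i·q^{i-1}, where inv_n(σ) = #{(i,j) : 0 < j-i < n and σ⁻¹(i) > σ⁻¹(j)}. -/

import Mathlib

open Finset Polynomial

/-- A permutation `σ` of `{0, ..., n+k-1}` satisfies the order constraints of the
word `w ∈ {r,c}^k` (where `true` encodes the letter `c` and `false` encodes `r`):
for each `i < k`, the position of value `i` is before the position of value `n+i`
when `w i = c`, and after it when `w i = r`. -/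
def StripConstraints (n k : ℕ) (w : Fin k → Bool) (σ : Equiv.Perm (Fin (n + k))) : Prop :=
  ∀ i : Fin k,
    (w i = true →
      (σ.symm ⟨i.val, by have := i.isLt; omega⟩).val
        < (σ.symm ⟨n + i.val, by have := i.isLt; omega⟩).val) ∧
    (w i = false →
      (σ.symm ⟨n + i.val, by have := i.isLt; omega⟩).val
        < (σ.symm ⟨i.val, by have := i.isLt; omega⟩).val)

instance {n k : ℕ} (w : Fin k → Bool) (σ : Equiv.Perm (Fin (n + k))) :
    Decidable (StripConstraints n k w σ) :=
  inferInstanceAs (Decidable (∀ _ : Fin k, _ ∧ _))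

/-- `σ` has no `n`-descent: `σ(j) - σ(j+1) ≤ n` for all consecutive positions. -/
def NoNDescent (n : ℕ) {m : ℕ} (σ : Equiv.Perm (Fin m)) : Prop :=
  ∀ j j' : Fin m, j'.val = j.val + 1 → (σ j).val ≤ n + (σ j').val

instance {n m : ℕ} (σ : Equiv.Perm (Fin m)) : Decidable (NoNDescent n σ) :=
  inferInstanceAs (Decidable (∀ _ _ : Fin m, _ → _))

/-- `inv_n(σ) = #{(i,j) : 0 < j - i < n and σ⁻¹(i) > σ⁻¹(j)}` (on values). -/
def InvN (n : ℕ) {m : ℕ} (σ : Equiv.Perm (Fin m)) : ℕ :=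
  (Finset.univ.filter fun p : Fin m × Fin m =>
    p.1.val < p.2.val ∧ p.2.val < p.1.val + n ∧ (σ.symm p.2).val < (σ.symm p.1).val).card

/-- The `q`-integer `[m]_q = 1 + q + ... + q^{m-1}` as a polynomial in `q = X`. -/
noncomputable def qInt (m : ℕ) : Polynomial ℤ := ∑ i ∈ Finset.range m, Polynomial.X ^ i

/-- The `q`-factorial `[n]_q! = [1]_q [2]_q ⋯ [n]_q`. -/
noncomputable def qFact (n : ℕ) : Polynomial ℤ := ∏ m ∈ Finset.range n, qInt (m + 1)

section Aux
open Equiv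


/-- number of inversions -/
def pinv {m : ℕ} (τ : Equiv.Perm (Fin m)) : ℕ :=
  (univ.filter fun p : Fin m × Fin m => p.1 < p.2 ∧ τ p.2 < τ p.1).card

/-- insert value at bottom position 0 -/
noncomputable def fb {m : ℕ} (p : Fin (m+1)) (π : Equiv.Perm (Fin m)) : Equiv.Perm (Fin (m+1)) :=
  Equiv.ofBijective (fun j => Fin.cases p (fun i => p.succAbove (π i)) j) (by
    rw [Fintype.bijective_iff_injective_and_card]
    refine ⟨fun a b h => ?_, rfl⟩
    induction a using Fin.cases <;> induction b using Fin.cases <;> simp_all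
    )

@[simp] lemma fb_zero {m : ℕ} (p : Fin (m+1)) (π : Equiv.Perm (Fin m)) : fb p π 0 = p := rfl
@[simp] lemma fb_succ {m : ℕ} (p : Fin (m+1)) (π : Equiv.Perm (Fin m)) (i : Fin m) :
    fb p π i.succ = p.succAbove (π i) := rfl

/-- insert value at top position `last` -/
noncomputable def ft {m : ℕ} (p : Fin (m+1)) (π : Equiv.Perm (Fin m)) : Equiv.Perm (Fin (m+1)) :=
  Equiv.ofBijective (fun j => Fin.lastCases p (fun i => p.succAbove (π i)) j) (by
    rw [Fintype.bijective_iff_injective_and_card]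
    refine ⟨fun a b h => ?_, rfl⟩
    induction a using Fin.lastCases <;> induction b using Fin.lastCases <;> simp_all
    )

@[simp] lemma ft_last {m : ℕ} (p : Fin (m+1)) (π : Equiv.Perm (Fin m)) :
    ft p π (Fin.last m) = p := by simp [ft]
@[simp] lemma ft_castSucc {m : ℕ} (p : Fin (m+1)) (π : Equiv.Perm (Fin m)) (i : Fin m) :
    ft p π i.castSucc = p.succAbove (π i) := by simp [ft]

lemma fb_bij {m : ℕ} :
    Function.Bijective (fun x : Fin (m+1) × Equiv.Perm (Fin m) => fb x.1 x.2) := by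
  rw [Fintype.bijective_iff_injective_and_card]
  constructor
  · rintro ⟨p, π⟩ ⟨p', π'⟩ h
    have h0 : p = p' := by simpa using congrFun (congrArg (fun e => e.toFun) h) 0
    subst h0
    have : π = π' := by
      ext i
      have := congrFun (congrArg (fun e => e.toFun) h) i.succ
      exact congrArg Fin.val (Fin.succAbove_right_injective (p := p) (by simpa using this))
    simp [this]
  · simp [Fintype.card_perm, Nat.factorial_succ]

lemma ft_bij {m : ℕ} :
    Function.Bijective (fun x : Fin (m+1) × Equiv.Perm (Fin m) => ft x.1 x.2) := by
  rw [Fintype.bijective_iff_injective_and_card]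
  constructor
  · rintro ⟨p, π⟩ ⟨p', π'⟩ h
    have h0 : p = p' := by
      simpa using congrFun (congrArg (fun e => e.toFun) h) (Fin.last m)
    subst h0
    have : π = π' := by
      ext i
      have := congrFun (congrArg (fun e => e.toFun) h) i.castSucc
      exact congrArg Fin.val (Fin.succAbove_right_injective (p := p) (by simpa [ft] using this))
    simp [this]
  · simp [Fintype.card_perm, Nat.factorial_succ]
open Finset Polynomial Equiv


lemma count_lt {m k : ℕ} (hk : k ≤ m) :
    (∑ x : Fin m, if x.val < k then 1 else 0) = k := by
  rw [Fin.sum_univ_eq_sum_range (fun t => if t < k then 1 else 0) m, ← Finset.card_filter]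
  have : (Finset.range m).filter (· < k) = Finset.range k := by
    ext x; simp; omega
  rw [this, Finset.card_range]

lemma count_ge {m k : ℕ} :
    (∑ x : Fin m, if k ≤ x.val then 1 else 0) = m - k := by
  rw [Fin.sum_univ_eq_sum_range (fun t => if k ≤ t then 1 else 0) m, ← Finset.card_filter]
  have : (Finset.range m).filter (k ≤ ·) = Finset.Ico k m := by
    ext x; simp; omega
  rw [this, Nat.card_Ico]

lemma pinv_sum {m : ℕ} (τ : Equiv.Perm (Fin m)) :
    pinv τ = ∑ a : Fin m, ∑ b : Fin m, if a < b ∧ τ b < τ a then 1 else 0 := by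
  rw [pinv, Finset.card_filter, Fintype.sum_prod_type]

lemma pinv_fb {m : ℕ} (p : Fin (m+1)) (π : Equiv.Perm (Fin m)) :
    pinv (fb p π) = p.val + pinv π := by
  rw [pinv_sum, pinv_sum, Fin.sum_univ_succ]
  congr 1
  · rw [Fin.sum_univ_succ]
    simp only [fb_zero, fb_succ, lt_irrefl, false_and, if_false, zero_add, Fin.succ_pos,
      true_and, Fin.succAbove_lt_iff_castSucc_lt]
    have h : ∀ j : Fin m, (if (π j).castSucc < p then (1:ℕ) else 0)
        = (fun x : Fin m => if x.val < p.val then (1:ℕ) else 0) (π j) := by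
      intro j; simp [Fin.lt_def]
    simp only [h]
    rw [Equiv.sum_comp π (fun x : Fin m => if x.val < p.val then (1:ℕ) else 0)]
    exact count_lt p.is_le
  · refine Finset.sum_congr rfl fun i _ => ?_
    rw [Fin.sum_univ_succ]
    simp only [fb_zero, fb_succ]
    simp only [Fin.not_lt_zero, false_and, if_false, zero_add]
    refine Finset.sum_congr rfl fun j _ => ?_
    congr 1
    simp [Fin.succ_lt_succ_iff, Fin.succAbove_lt_succAbove_iff]

lemma pinv_ft {m : ℕ} (p : Fin (m+1)) (π : Equiv.Perm (Fin m)) :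
    pinv (ft p π) = (m - p.val) + pinv π := by
  rw [pinv_sum, pinv_sum]
  rw [Fin.sum_univ_castSucc
    (f := fun a => ∑ b : Fin (m+1), if a < b ∧ ft p π b < ft p π a then 1 else 0)]
  have hlast : (∑ b : Fin (m+1),
      if Fin.last m < b ∧ ft p π b < ft p π (Fin.last m) then 1 else 0) = 0 := by
    refine Finset.sum_eq_zero fun b _ => ?_
    rw [if_neg]; rintro ⟨hb, -⟩; exact absurd hb (not_lt.mpr b.le_last)
  rw [hlast, add_zero]
  have hrow : ∀ i : Fin m, (∑ b : Fin (m+1),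
        if i.castSucc < b ∧ ft p π b < ft p π i.castSucc then 1 else 0)
      = (fun x : Fin m => if p.val ≤ x.val then (1:ℕ) else 0) (π i)
        + ∑ j : Fin m, if i < j ∧ π j < π i then 1 else 0 := by
    intro i
    rw [Fin.sum_univ_castSucc
      (f := fun b => if i.castSucc < b ∧ ft p π b < ft p π i.castSucc then (1:ℕ) else 0)]
    rw [add_comm]
    congr 1
    · simp only [ft_castSucc, ft_last]
      have h2 : (Fin.castSucc i < Fin.last m ∧ p < p.succAbove (π i)) ↔ p.val ≤ (π i).val := by
        rw [and_iff_right (Fin.castSucc_lt_last i), Fin.lt_succAbove_iff_le_castSucc,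
          Fin.le_def, Fin.coe_castSucc]
      simp only [h2]
    · refine Finset.sum_congr rfl fun j _ => ?_
      simp only [ft_castSucc]
      congr 1
      simp [Fin.castSucc_lt_castSucc_iff, Fin.succAbove_lt_succAbove_iff]
  simp only [hrow]
  rw [Finset.sum_add_distrib]
  congr 1
  rw [Equiv.sum_comp π (fun x : Fin m => if p.val ≤ x.val then (1:ℕ) else 0)]
  exact count_ge


lemma sum_ft {m : ℕ} {M : Type*} [AddCommMonoid M] (g : Equiv.Perm (Fin (m+1)) → M) :
    ∑ τ : Equiv.Perm (Fin (m+1)), g τ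
      = ∑ p : Fin (m+1), ∑ π : Equiv.Perm (Fin m), g (ft p π) := by
  trans ∑ x : Fin (m+1) × Equiv.Perm (Fin m), g (ft x.1 x.2)
  · exact (Fintype.sum_bijective _ ft_bij (fun x => g (ft x.1 x.2)) g (fun x => rfl)).symm
  · exact Fintype.sum_prod_type _

lemma sum_fb {m : ℕ} {M : Type*} [AddCommMonoid M] (g : Equiv.Perm (Fin (m+1)) → M) :
    ∑ τ : Equiv.Perm (Fin (m+1)), g τ
      = ∑ p : Fin (m+1), ∑ π : Equiv.Perm (Fin m), g (fb p π) := by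
  trans ∑ x : Fin (m+1) × Equiv.Perm (Fin m), g (fb x.1 x.2)
  · exact (Fintype.sum_bijective _ fb_bij (fun x => g (fb x.1 x.2)) g (fun x => rfl)).symm
  · exact Fintype.sum_prod_type _

lemma qSum : ∀ m : ℕ,
    (∑ τ : Equiv.Perm (Fin m), (Polynomial.X : Polynomial ℤ) ^ pinv τ) = qFact m := by
  intro m
  induction m with
  | zero =>
    rw [Finset.univ_unique, Finset.sum_singleton]
    have h0 : pinv (1 : Equiv.Perm (Fin 0)) = 0 := by rw [pinv_sum]; simp
    have h0' : ∀ τ : Equiv.Perm (Fin 0), pinv τ = 0 := fun τ => by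
      rw [pinv_sum]; simp
    simp [h0' _, qFact]
  | succ m ih =>
    rw [sum_fb (fun τ => (Polynomial.X : Polynomial ℤ) ^ pinv τ)]
    simp only [pinv_fb, pow_add]
    rw [← Finset.sum_mul_sum, ih]
    have h1 : (∑ p : Fin (m+1), (Polynomial.X : Polynomial ℤ) ^ p.val) = qInt (m+1) := by
      rw [qInt, ← Fin.sum_univ_eq_sum_range (fun i => (Polynomial.X : Polynomial ℤ) ^ i) (m+1)]
    have h3 : qFact (m+1) = qFact m * qInt (m+1) :=
      Finset.prod_range_succ (fun k => qInt (k+1)) m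
    rw [h1, h3, mul_comm]

lemma arith (n' : ℕ) :
    (∑ p ∈ Finset.range (n'+1), ∑ a ∈ Finset.range n',
      if a < p then (Polynomial.X : Polynomial ℤ) ^ (a + (n' - p)) else 0)
    = ∑ k ∈ Finset.range n', ((k : Polynomial ℤ) + 1) * Polynomial.X ^ k := by
  rw [← Finset.sum_range_reflect]
  have h1 : ∀ c ∈ Finset.range (n'+1),
      (∑ a ∈ Finset.range n',
        if a < n' + 1 - 1 - c then (Polynomial.X : Polynomial ℤ) ^ (a + (n' - (n' + 1 - 1 - c))) else 0)
      = ∑ a ∈ Finset.range (n' - c), (Polynomial.X : Polynomial ℤ) ^ (a + c) := by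
    intro c hc
    rw [Finset.mem_range] at hc
    have hc' : c ≤ n' := by omega
    have e1 : n' + 1 - 1 - c = n' - c := by omega
    have e2 : n' - (n' - c) = c := by omega
    rw [e1]
    rw [Finset.sum_congr rfl (fun a _ => by rw [e2])]
    rw [← Finset.sum_filter]
    congr 1
    ext x; simp; omega
  rw [Finset.sum_congr rfl h1, Finset.sum_range_succ]
  rw [Nat.sub_self, Finset.range_zero, Finset.sum_empty, add_zero]
  have h2 : ∀ c ∈ Finset.range n',
      (∑ a ∈ Finset.range (n' - c), (Polynomial.X : Polynomial ℤ) ^ (a + c))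
      = ∑ k ∈ Finset.Ico c n', (Polynomial.X : Polynomial ℤ) ^ k := by
    intro c hc
    rw [Finset.sum_Ico_eq_sum_range]
    exact Finset.sum_congr rfl fun a _ => by rw [add_comm]
  rw [Finset.sum_congr rfl h2, Finset.range_eq_Ico,
    Finset.sum_Ico_Ico_comm 0 n' (fun c k => (Polynomial.X : Polynomial ℤ) ^ k)]
  refine Finset.sum_congr rfl fun k _ => ?_
  rw [Finset.sum_const, Nat.card_Ico, Nat.sub_zero, nsmul_eq_mul]
  push_cast
  ring


end Aux

theorem stmt8 (n : ℕ) (hn : 2 ≤ n) :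
    ∑ σ ∈ Finset.univ.filter
        (fun σ : Equiv.Perm (Fin (n + 1)) => StripConstraints n 1 (fun _ => true) σ),
      Polynomial.X ^ InvN n σ
      = qFact (n - 1) * ∑ i ∈ Finset.range n, ((i : Polynomial ℤ) + 1) * Polynomial.X ^ i := by

  obtain ⟨m, rfl⟩ : ∃ m, n = m + 2 := ⟨n - 2, by omega⟩
  set z : Fin (m + 2 + 1) := ⟨0, by omega⟩ with hz
  set t : Fin (m + 2 + 1) := ⟨m + 2, by omega⟩ with ht
  -- the strip constraint is just: position of 0 before position of m+2
  have hC : ∀ σ : Equiv.Perm (Fin (m + 2 + 1)),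
      StripConstraints (m+2) 1 (fun _ => true) σ ↔ (σ.symm z).val < (σ.symm t).val := by
    intro σ
    constructor
    · intro h
      have h2 := (h 0).1 rfl
      convert h2 using 3 <;> simp [hz, ht]
    · intro h i
      refine ⟨fun _ => ?_, fun hf => by simp at hf⟩
      have hi : i = 0 := Subsingleton.elim i 0
      subst hi
      convert h using 3 <;> simp [hz, ht]
  -- InvN = pinv of the inverse, on constrained permutations
  have hI : ∀ σ : Equiv.Perm (Fin (m + 2 + 1)),
      (σ.symm z).val < (σ.symm t).val → InvN (m+2) σ = pinv σ.symm := by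
    intro σ hσ
    unfold InvN pinv
    congr 1
    ext ⟨a, b⟩
    simp only [Finset.mem_filter, Finset.mem_univ, true_and, Fin.lt_def]
    constructor
    · rintro ⟨h1, h2, h3⟩; exact ⟨h1, h3⟩
    · rintro ⟨h1, h3⟩
      refine ⟨h1, ?_, h3⟩
      by_contra hb
      have ha0 : a = z := Fin.ext (by have := b.isLt; show a.val = 0; omega)
      have hbN : b = t := Fin.ext (by have := b.isLt; simp [ht]; omega)
      rw [ha0, hbN] at h3
      omega
  -- rewrite the filtered sum as a full sum with ite, in terms of τ = σ.symm
  rw [Finset.sum_filter]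
  have step1 : (∑ σ : Equiv.Perm (Fin (m + 2 + 1)),
        if StripConstraints (m+2) 1 (fun _ => true) σ then (Polynomial.X : Polynomial ℤ) ^ InvN (m+2) σ else 0)
      = ∑ τ : Equiv.Perm (Fin (m + 2 + 1)),
        if (τ z).val < (τ t).val then (Polynomial.X : Polynomial ℤ) ^ pinv τ else 0 := by
    have hbij : Function.Bijective (fun σ : Equiv.Perm (Fin (m + 2 + 1)) => σ.symm) :=
      Function.bijective_iff_has_inverse.2
        ⟨fun σ => σ.symm, fun σ => Equiv.symm_symm σ, fun σ => Equiv.symm_symm σ⟩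
    refine Fintype.sum_bijective _ hbij _ _ fun σ => ?_
    by_cases h : (σ.symm z).val < (σ.symm t).val
    · rw [if_pos ((hC σ).2 h), if_pos h, hI σ h]
    · rw [if_neg (fun hc => h ((hC σ).1 hc)), if_neg h]
  rw [step1]
  rw [sum_ft (fun τ => if (τ z).val < (τ t).val then (Polynomial.X : Polynomial ℤ) ^ pinv τ else 0)]
  have step2 : ∀ (p : Fin (m+2+1)) (π : Equiv.Perm (Fin (m+2))),
      (if ((ft p π) z).val < ((ft p π) t).val then (Polynomial.X : Polynomial ℤ) ^ pinv (ft p π) else 0)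
      = if (π 0).val < p.val then (Polynomial.X : Polynomial ℤ) ^ ((m+2 - p.val) + pinv π) else 0 := by
    intro p π
    have e1 : (ft p π) z = p.succAbove (π 0) := ft_castSucc p π 0
    have e2 : (ft p π) t = p := ft_last p π
    rw [e1, e2, pinv_ft]
    have hcond : ((p.succAbove (π 0)).val < p.val) ↔ ((π 0).val < p.val) := by
      rw [← Fin.lt_def, Fin.succAbove_lt_iff_castSucc_lt, Fin.lt_def, Fin.coe_castSucc]
    simp only [hcond]
  simp only [step2]
  have step3 : ∀ p : Fin (m+2+1),
      (∑ π : Equiv.Perm (Fin (m+2)),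
        if (π 0).val < p.val then (Polynomial.X : Polynomial ℤ) ^ ((m+2 - p.val) + pinv π) else 0)
      = ∑ a : Fin (m+2), ∑ ρ : Equiv.Perm (Fin (m+1)),
        if a.val < p.val then (Polynomial.X : Polynomial ℤ) ^ ((m+2 - p.val) + (a.val + pinv ρ)) else 0 := by
    intro p
    refine (sum_fb (m := m+1)
      (fun π => if (π 0).val < p.val then (Polynomial.X : Polynomial ℤ) ^ ((m+2 - p.val) + pinv π) else 0)).trans ?_
    refine Finset.sum_congr rfl fun a _ => Finset.sum_congr rfl fun ρ _ => ?_
    simp only [pinv_fb, fb_zero]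
  simp only [step3]
  have e3 : ∀ (p : Fin (m+2+1)) (a : Fin (m+2)) (ρ : Equiv.Perm (Fin (m+1))),
      (if a.val < p.val then (Polynomial.X : Polynomial ℤ) ^ ((m+2 - p.val) + (a.val + pinv ρ)) else 0)
      = (if a.val < p.val then (Polynomial.X : Polynomial ℤ) ^ (a.val + (m+2 - p.val)) else 0)
          * (Polynomial.X : Polynomial ℤ) ^ pinv ρ := by
    intro p a ρ
    rw [ite_mul, zero_mul, ← pow_add]
    congr 2
    omega
  simp only [e3]
  have e4 : ∀ (p : Fin (m+2+1)) (a : Fin (m+2)),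
      (∑ ρ : Equiv.Perm (Fin (m+1)),
        (if a.val < p.val then (Polynomial.X : Polynomial ℤ) ^ (a.val + (m+2 - p.val)) else 0)
          * (Polynomial.X : Polynomial ℤ) ^ pinv ρ)
      = (if a.val < p.val then (Polynomial.X : Polynomial ℤ) ^ (a.val + (m+2 - p.val)) else 0)
          * qFact (m+1) := by
    intro p a
    rw [← Finset.mul_sum, qSum (m+1)]
  simp only [e4]
  have e5 : (∑ p : Fin (m+2+1), ∑ a : Fin (m+2),
      (if a.val < p.val then (Polynomial.X : Polynomial ℤ) ^ (a.val + (m+2 - p.val)) else 0) * qFact (m+1))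
      = (∑ p : Fin (m+2+1), ∑ a : Fin (m+2),
        if a.val < p.val then (Polynomial.X : Polynomial ℤ) ^ (a.val + (m+2 - p.val)) else 0) * qFact (m+1) := by
    rw [Finset.sum_mul]
    refine Finset.sum_congr rfl fun p _ => ?_
    rw [Finset.sum_mul]
  rw [e5]
  have e6 : (∑ p : Fin (m+2+1), ∑ a : Fin (m+2),
      if a.val < p.val then (Polynomial.X : Polynomial ℤ) ^ (a.val + (m+2 - p.val)) else 0)
      = ∑ p ∈ Finset.range (m+2+1), ∑ a ∈ Finset.range (m+2),
        if a < p then (Polynomial.X : Polynomial ℤ) ^ (a + (m+2 - p)) else 0 := by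
    rw [← Fin.sum_univ_eq_sum_range (fun p => ∑ a ∈ Finset.range (m+2),
      if a < p then (Polynomial.X : Polynomial ℤ) ^ (a + (m+2 - p)) else 0) (m+2+1)]
    refine Finset.sum_congr rfl fun p _ => ?_
    rw [← Fin.sum_univ_eq_sum_range (fun a =>
      if a < p.val then (Polynomial.X : Polynomial ℤ) ^ (a + (m+2 - p.val)) else 0) (m+2)]
  rw [e6, arith (m+2)]
  have e7 : m + 2 - 1 = m + 1 := rfl
  rw [e7, mul_comm]
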